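/- If G : X → A is a conditional expectation, h = G(p) and k = G(q) = 1 − h, then hka = φ²(a)hk for every a ∈ A. -/

import Mathlib

open TensorProduct

/-- The linear map `A ⊗[R] B → X`, `a ⊗ b ↦ i a * j b`. -/
noncomputable def blendMul (R : Type*) {A B X : Type*} [CommRing R] [Ring A] [Ring B] [Ring X]
    [Algebra R A] [Algebra R B] [Algebra R X] (i : A →ₐ[R] X) (j : B →ₐ[R] X) :
    A ⊗[R] B →ₗ[R] X :=
  (LinearMap.mul' R X).comp (TensorProduct.map i.toLinearMap j.toLinearMap)

/-- Pure ring computation used at the end. -/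
lemma stmt12_ringlem {A : Type*} [Ring A] (h a e f u w : A)
    (K1 : h * a = (e + f - a) * h + (a - f))
    (K2 : h * (e + f - a) = (u + w - e - f + a) * h + (e + f - a - w))
    (K3 : h * f = u * h) :
    h * (1 - h) * a = (u + w - e - f + a) * (h * (1 - h)) := by
  have e1 : h * (1 - h) * a = h * a - h * (h * a) := by noncomm_ring
  rw [e1, K1]
  have e2 : h * ((e + f - a) * h + (a - f)) = h * (e + f - a) * h + h * a - h * f := by
    noncomm_ring
  rw [e2, K2, K1, K3]
  noncomm_ring

theorem stmt12 {R A X : Type*} [CommRing R] [Ring A] [Ring X] [Algebra R A] [Algebra R X]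
    (i : A →ₐ[R] X) (j : (R × R) →ₐ[R] X)
    (h1 : Function.Bijective (blendMul R i j)) (h2 : Function.Bijective (blendMul R j i))
    (p q : X) (hp : p = j (1, 0)) (hq : q = j (0, 1))
    (E F : A →ₗ[R] A)
    (hE : ∀ a : A, p * i a * p = i (E a) * p)
    (hF : ∀ a : A, q * i a * q = i (F a) * q)
    (G : X →ₗ[R] A)
    (hG1 : ∀ (a : A) (x : X), G (i a * x) = a * G x)
    (hG2 : ∀ (x : X) (a : A), G (x * i a) = G x * a)
    (hG3 : ∀ a : A, G (i a) = a) :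
    G q = 1 - G p ∧
    ∀ a : A, G p * G q * a =
      (E (E a + F a - a) + F (E a + F a - a) - (E a + F a - a)) * (G p * G q) := by
  -- basic idempotent facts
  have hpq1 : p + q = 1 := by
    rw [hp, hq, ← map_add]
    norm_num
    exact map_one j
  have hpp : p * p = p := by rw [hp, ← map_mul]; norm_num
  have hqq : q * q = q := by rw [hq, ← map_mul]; norm_num
  have hpq0 : p * q = 0 := by rw [hp, hq, ← map_mul]; norm_num; exact map_zero j
  have hqp0 : q * p = 0 := by rw [hp, hq, ← map_mul]; norm_num; exact map_zero j
  -- uniqueness of decomposition from injectivity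
  have uniq : ∀ a b : A, i a * p + i b * q = 0 → a = 0 ∧ b = 0 := by
    intro a b hab
    have ht : blendMul R i j (a ⊗ₜ[R] ((1 : R), (0 : R)) + b ⊗ₜ[R] ((0 : R), (1 : R))) = 0 := by
      simp only [blendMul, map_add, LinearMap.comp_apply, TensorProduct.map_tmul,
        LinearMap.mul'_apply, AlgHom.toLinearMap_apply]
      rw [← hp, ← hq]
      exact hab
    have h0 : a ⊗ₜ[R] ((1 : R), (0 : R)) + b ⊗ₜ[R] ((0 : R), (1 : R)) = 0 :=
      h1.injective (by rw [ht, map_zero])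
    constructor
    · have := congrArg (fun t => (TensorProduct.rid R A)
        (LinearMap.lTensor A (LinearMap.fst R R R) t)) h0
      simpa using this
    · have := congrArg (fun t => (TensorProduct.rid R A)
        (LinearMap.lTensor A (LinearMap.snd R R R) t)) h0
      simpa using this
  have uniq' : ∀ a b a' b' : A, i a * p + i b * q = i a' * p + i b' * q → a = a' ∧ b = b' := by
    intro a b a' b' hab
    have h0 : i (a - a') * p + i (b - b') * q = 0 := by
      simp only [map_sub]
      rw [sub_mul, sub_mul, sub_add_sub_comm, hab, sub_self]
    obtain ⟨ha, hb⟩ := uniq _ _ h0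
    constructor
    · rwa [sub_eq_zero] at ha
    · rwa [sub_eq_zero] at hb
  -- existence of decomposition from surjectivity
  have exist : ∀ x : X, ∃ a b : A, x = i a * p + i b * q := by
    intro x
    obtain ⟨t, ht⟩ := h1.surjective x
    rw [← ht]; clear ht
    induction t using TensorProduct.induction_on with
    | zero => exact ⟨0, 0, by simp⟩
    | tmul a r =>
      refine ⟨r.1 • a, r.2 • a, ?_⟩
      have hjr : j r = r.1 • p + r.2 • q := by
        rw [hp, hq, ← map_smul, ← map_smul, ← map_add]
        congr 1
        simp [Prod.ext_iff]
      simp only [blendMul, LinearMap.comp_apply, TensorProduct.map_tmul,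
        LinearMap.mul'_apply, AlgHom.toLinearMap_apply]
      rw [hjr]
      simp only [map_smul, mul_add, smul_mul_assoc, mul_smul_comm]
    | add x y hx hy =>
      obtain ⟨a, b, hab⟩ := hx
      obtain ⟨a', b', hab'⟩ := hy
      exact ⟨a + a', b + b', by
        rw [map_add, hab, hab', map_add, map_add, add_mul, add_mul]; abel⟩
  -- the key decomposition of p * i a
  have dE : ∀ a : A, p * i a = i (E a) * p + i (a - F a) * q := by
    intro a
    obtain ⟨u, v, huv⟩ := exist (p * i a)
    obtain ⟨u', v', huv'⟩ := exist (q * i a)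
    -- u = E a
    have hu : u = E a := by
      have h3 : i u * p = i (E a) * p := by
        have : p * i a * p = (i u * p + i v * q) * p := by rw [← huv]
        rw [hE a] at this
        rw [add_mul, mul_assoc, mul_assoc, hpp, hqp0, mul_zero, add_zero] at this
        exact this.symm
      have := uniq' u 0 (E a) 0 (by rw [map_zero, zero_mul, add_zero, add_zero, h3])
      exact this.1
    -- v' = F a
    have hv' : v' = F a := by
      have h3 : i v' * q = i (F a) * q := by
        have : q * i a * q = (i u' * p + i v' * q) * q := by rw [← huv']
        rw [hF a] at this
        rw [add_mul, mul_assoc, mul_assoc, hqq, hpq0, mul_zero, zero_add] at this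
        exact this.symm
      have := uniq' 0 v' 0 (F a) (by rw [map_zero, zero_mul, zero_add, zero_add, h3])
      exact this.2
    -- sum trick: i a = i (u + u') * p + i (v + v') * q and i a = i a * p + i a * q
    have hsum : i (u + u') * p + i (v + v') * q = i a * p + i a * q := by
      have : p * i a + q * i a = i a := by
        rw [← add_mul, hpq1, one_mul]
      rw [huv, huv'] at this
      rw [map_add, map_add, add_mul, add_mul]
      calc i u * p + i u' * p + (i v * q + i v' * q)
          = i u * p + i v * q + (i u' * p + i v' * q) := by abel
        _ = i a := this
        _ = i a * 1 := (mul_one _).symm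
        _ = i a * p + i a * q := by rw [← hpq1, mul_add]
    obtain ⟨-, hvv⟩ := uniq' (u + u') (v + v') a a hsum
    have hv : v = a - F a := by
      rw [← hv', ← hvv, add_sub_cancel_right]
    rw [huv, hu, hv]
  -- idempotency of E and F
  have idE : ∀ a : A, E (E a) = E a := by
    intro a
    have h3 : i (E (E a)) * p = i (E a) * p := by
      rw [← hE (E a), mul_assoc, ← hE a, ← mul_assoc, ← mul_assoc, hpp]
    exact (uniq' (E (E a)) 0 (E a) 0 (by rw [map_zero, zero_mul, add_zero, add_zero, h3])).1
  have idF : ∀ a : A, F (F a) = F a := by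
    intro a
    have h3 : i (F (F a)) * q = i (F a) * q := by
      rw [← hF (F a), mul_assoc, ← hF a, ← mul_assoc, ← mul_assoc, hqq]
    exact (uniq' 0 (F (F a)) 0 (F a) (by rw [map_zero, zero_mul, zero_add, zero_add, h3])).2
  -- G q = 1 - G p
  have hGq : G q = 1 - G p := by
    have hq1 : q = 1 - p := by rw [← hpq1, add_sub_cancel_left]
    have h1' : G (1 : X) = 1 := by rw [← (map_one i), hG3]
    rw [hq1, map_sub, h1']
  -- key relation: G p * a = (E a + F a - a) * G p + (a - F a)
  have key : ∀ a : A, G p * a = (E a + F a - a) * G p + (a - F a) := by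
    intro a
    have h3 := congrArg G (dE a)
    rw [hG2, map_add, hG1, hG1, hGq] at h3
    rw [h3]
    noncomm_ring
  refine ⟨hGq, ?_⟩
  intro a
  have K1 : G p * a = (E a + F a - a) * G p + (a - F a) := key a
  have K3 : G p * F a = E (F a) * G p := by
    have := key (F a)
    rw [idF a] at this
    rw [this]
    noncomm_ring
  have K2 : G p * (E a + F a - a) =
      (E (F a) + F (E a) - E a - F a + a) * G p + (E a + F a - a - F (E a)) := by
    have := key (E a + F a - a)
    simp only [map_add, map_sub, idE, idF] at this
    rw [this]
    noncomm_ring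
  have main := stmt12_ringlem (G p) a (E a) (F a) (E (F a)) (F (E a)) K1 K2 K3
  rw [hGq]
  have hc : E (E a + F a - a) + F (E a + F a - a) - (E a + F a - a)
      = E (F a) + F (E a) - E a - F a + a := by
    simp only [map_add, map_sub, idE, idF]
    abel
  rw [hc]
  exact main
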